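/- If every production of a grammar G whose right-hand side contains s_b also contains a matching e_b after it (formally: every production right-hand side, with nonterminals deleted, is a balanced string over {s_b, e_b}), and every nonterminal's terminal derivations preserve this, then every w ∈ L(G) is balanced with respect to s_b and e_b. -/
import Mathlib


/-- A string over `T` is balanced w.r.t. block delimiters `sb`, `eb` if every prefix has
at least as many `sb`s as `eb`s and the total counts are equal. -/
def BlockBalanced {T : Type} [DecidableEq T] (sb eb : T) (w : List T) : Prop :=
  (∀ p : List T, p <+: w → p.count eb ≤ p.count sb) ∧ w.count sb = w.count eb

/-- Projection of a sentential form: delete nonterminals and all terminals other than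
`sb` and `eb`. -/
def proj {T N : Type} [DecidableEq T] (sb eb : T) (β : List (Symbol T N)) : List T :=
  β.filterMap fun s =>
    match s with
    | .terminal t => if t = sb ∨ t = eb then some t else none
    | .nonterminal _ => none

lemma prefix_split {T : Type} {p a b : List T} (h : p <+: a ++ b) :
    p <+: a ∨ ∃ q, p = a ++ q ∧ q <+: b := by
  rcases le_or_gt p.length a.length with hl | hl
  · exact Or.inl (List.prefix_of_prefix_length_le h (a.prefix_append b) hl)
  · rcases List.prefix_of_prefix_length_le (a.prefix_append b) h hl.le with ⟨q, rfl⟩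
    exact Or.inr ⟨q, rfl, (List.prefix_append_right_inj a).mp h⟩

lemma proj_append {T N : Type} [DecidableEq T] (sb eb : T) (a b : List (Symbol T N)) :
    proj sb eb (a ++ b) = proj sb eb a ++ proj sb eb b :=
  List.filterMap_append ..

lemma balanced_insert {T : Type} [DecidableEq T] {sb eb : T} {a b c : List T}
    (hac : BlockBalanced sb eb (a ++ c)) (hb : BlockBalanced sb eb b) :
    BlockBalanced sb eb (a ++ b ++ c) := by
  obtain ⟨hac1, hac2⟩ := hac
  obtain ⟨hb1, hb2⟩ := hb
  constructor
  · intro p hp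
    rw [List.append_assoc] at hp
    rcases prefix_split hp with hpa | ⟨q, rfl, hq⟩
    · exact hac1 p (hpa.trans (a.prefix_append c))
    · rcases prefix_split hq with hqb | ⟨r, rfl, hr⟩
      · have h1 := hac1 a (a.prefix_append c)
        have h2 := hb1 q hqb
        simp only [List.count_append]
        omega
      · have h1 := hac1 (a ++ r) ((List.prefix_append_right_inj a).mpr hr)
        simp only [List.count_append] at h1 ⊢
        omega
  · simp only [List.count_append] at hac2 ⊢
    omega

/-- If the projection of every production's right-hand side is balanced, then every word
of the language is balanced w.r.t. `s_b`, `e_b`. -/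
theorem language_balanced {T : Type} [DecidableEq T] (g : ContextFreeGrammar T)
    (sb eb : T) (hne : sb ≠ eb)
    (hrules : ∀ r ∈ g.rules, BlockBalanced sb eb (proj sb eb r.output))
    (w : List T) (hw : w ∈ g.language) :
    BlockBalanced sb eb (proj (N := g.NT) sb eb (w.map Symbol.terminal)) := by
  rw [ContextFreeGrammar.mem_language_iff] at hw
  suffices h : ∀ β, g.Derives [Symbol.nonterminal g.initial] β → BlockBalanced sb eb (proj sb eb β) from h _ hw
  intro β hβ
  induction hβ with
  | refl =>
    constructor
    · intro p hp
      have : p = [] := List.prefix_nil.mp (by simpa [proj] using hp)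
      simp [this]
    · simp [proj]
  | tail _ step ih =>
    obtain ⟨r, hr, hrw⟩ := step
    rw [ContextFreeRule.rewrites_iff] at hrw
    obtain ⟨p, q, rfl, rfl⟩ := hrw
    rw [proj_append, proj_append] at ih ⊢
    have : proj (N := g.NT) sb eb [Symbol.nonterminal r.input] = [] := by simp [proj]
    rw [this, List.append_nil] at ih
    exact balanced_insert ih (hrules r hr)
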